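/- Let a ∈ ℝ and b, c > 0, and define K on the open set U = {(x, y) ∈ ℝ² : |y| < x} by K(x, y) = a + (2bx + c)/(x² − y²). Then the Hessian matrix of K (the 2×2 matrix of second partial derivatives) is positive definite at every point of U. -/

import Mathlib

open ContinuousLinearMap

noncomputable def lm (u v : ℝ) : ℝ × ℝ →L[ℝ] ℝ :=
  u • ContinuousLinearMap.fst ℝ ℝ ℝ + v • ContinuousLinearMap.snd ℝ ℝ ℝ

@[simp] lemma lm_apply (u v : ℝ) (q : ℝ × ℝ) : lm u v q = u * q.1 + v * q.2 := by
  simp [lm]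

lemma lm_eq {u v u' v' : ℝ} (h1 : u = u') (h2 : v = v') : lm u v = lm u' v' := by rw [h1, h2]

lemma lm_hasFDerivAt_D (q : ℝ × ℝ) :
    HasFDerivAt (fun q : ℝ × ℝ => q.1 ^ 2 - q.2 ^ 2) (lm (2 * q.1) (-(2 * q.2))) q := by
  have h1 := (hasFDerivAt_fst (𝕜 := ℝ) (p := q) (F := ℝ)).mul
      (hasFDerivAt_fst (𝕜 := ℝ) (p := q) (F := ℝ))
  have h2 := (hasFDerivAt_snd (𝕜 := ℝ) (p := q) (F := ℝ)).mul
      (hasFDerivAt_snd (𝕜 := ℝ) (p := q) (F := ℝ))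
  have h3 := h1.sub h2
  have heq : (fun q : ℝ × ℝ => q.1 ^ 2 - q.2 ^ 2) = fun q : ℝ × ℝ => q.1 * q.1 - q.2 * q.2 := by
    funext q; ring
  rw [heq]
  refine h3.congr_fderiv ?_
  ext v <;> simp [lm] <;> ring

lemma lm_hasFDerivAt_div {N D : ℝ × ℝ → ℝ} {n1 n2 d1 d2 : ℝ} {q : ℝ × ℝ}
    (hN : HasFDerivAt N (lm n1 n2) q) (hD : HasFDerivAt D (lm d1 d2) q) (h : D q ≠ 0) :
    HasFDerivAt (fun q => N q / D q)
      (lm ((n1 * D q - N q * d1) / D q ^ 2) ((n2 * D q - N q * d2) / D q ^ 2)) q := by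
  have hinv : HasFDerivAt (fun q => (D q)⁻¹)
      ((-mulLeftRight ℝ ℝ (D q)⁻¹ (D q)⁻¹).comp (lm d1 d2)) q :=
    (hasFDerivAt_inv' (𝕜 := ℝ) h).comp q hD
  have hmul := hN.mul hinv
  have heq : (fun q => N q / D q) = fun q => N q * (D q)⁻¹ := by
    funext q; rw [div_eq_mul_inv]
  rw [heq]
  refine hmul.congr_fderiv ?_
  ext v
  · simp [lm, mulLeftRight_apply]
    field_simp
    ring
  · simp [lm, mulLeftRight_apply]
    field_simp
    ring

lemma lm_hasFDerivAt_poly (α β μ γ δ ε : ℝ) (q : ℝ × ℝ) :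
    HasFDerivAt (fun q : ℝ × ℝ => α * q.1 ^ 2 + β * q.2 ^ 2 + μ * (q.1 * q.2) + γ * q.1 + δ * q.2 + ε)
      (lm (2 * α * q.1 + μ * q.2 + γ) (2 * β * q.2 + μ * q.1 + δ)) q := by
  have hfst := hasFDerivAt_fst (𝕜 := ℝ) (p := q) (F := ℝ)
  have hsnd := hasFDerivAt_snd (𝕜 := ℝ) (p := q) (F := ℝ)
  have h := ((((((hfst.mul hfst).const_mul α).add ((hsnd.mul hsnd).const_mul β)).add
      ((hfst.mul hsnd).const_mul μ)).add (hfst.const_mul γ)).add (hsnd.const_mul δ)).add_const ε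
  have heq : (fun q : ℝ × ℝ => α * q.1 ^ 2 + β * q.2 ^ 2 + μ * (q.1 * q.2) + γ * q.1 + δ * q.2 + ε)
      = fun q : ℝ × ℝ => α * (q.1 * q.1) + β * (q.2 * q.2) + μ * (q.1 * q.2) + γ * q.1 + δ * q.2 + ε := by
    funext q; ring
  rw [heq]
  refine h.congr_fderiv ?_
  ext v <;> simp [lm] <;> ring

lemma lm_hasFDerivAt_Dsq (q : ℝ × ℝ) :
    HasFDerivAt (fun q : ℝ × ℝ => (q.1 ^ 2 - q.2 ^ 2) ^ 2)
      (lm (4 * q.1 * (q.1 ^ 2 - q.2 ^ 2)) (-(4 * q.2 * (q.1 ^ 2 - q.2 ^ 2)))) q := by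
  have h := (lm_hasFDerivAt_D q).mul (lm_hasFDerivAt_D q)
  have heq : (fun q : ℝ × ℝ => (q.1 ^ 2 - q.2 ^ 2) ^ 2)
      = fun q : ℝ × ℝ => (q.1 ^ 2 - q.2 ^ 2) * (q.1 ^ 2 - q.2 ^ 2) := by
    funext q; ring
  rw [heq]
  refine h.congr_fderiv ?_
  ext v <;> simp [lm] <;> ring

lemma quad_form_pos {A B C u w : ℝ} (hA : 0 < A) (hdet : 0 < A * C - B ^ 2)
    (h : u ≠ 0 ∨ w ≠ 0) : 0 < A * u ^ 2 + 2 * B * (u * w) + C * w ^ 2 := by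
  rcases em (w = 0) with hw | hw
  · have hu : u ≠ 0 := by rcases h with h' | h' <;> [exact h'; exact absurd hw h']
    have h2 : 0 < u ^ 2 := lt_of_le_of_ne (sq_nonneg u) (Ne.symm (pow_ne_zero 2 hu))
    rw [hw]
    nlinarith [mul_pos hA h2]
  · have hw2 : 0 < w ^ 2 := lt_of_le_of_ne (sq_nonneg w) (Ne.symm (pow_ne_zero 2 hw))
    nlinarith [sq_nonneg (A * u + B * w), mul_pos hdet hw2, mul_pos hA hw2]

/-- Partial derivative with respect to the first variable. -/
noncomputable def pdx (f : ℝ × ℝ → ℝ) (p : ℝ × ℝ) : ℝ := fderiv ℝ f p (1, 0)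

/-- Partial derivative with respect to the second variable. -/
noncomputable def pdy (f : ℝ × ℝ → ℝ) (p : ℝ × ℝ) : ℝ := fderiv ℝ f p (0, 1)

/-- The Hessian matrix of second partial derivatives. -/
noncomputable def hessian (f : ℝ × ℝ → ℝ) (p : ℝ × ℝ) : Matrix (Fin 2) (Fin 2) ℝ :=
  !![pdx (pdx f) p, pdx (pdy f) p;
     pdy (pdx f) p, pdy (pdy f) p]

/-- Convexity of the linear Weingarten (Bloore) flow: for `b, c > 0`, the Hessian of
`K = a + (2bx + c)/(x²−y²)` is positive definite on `U = {(x,y) : |y| < x}`. -/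
theorem linear_weingarten_convex (a b c : ℝ) (hb : 0 < b) (hc : 0 < c)
    (K : ℝ × ℝ → ℝ)
    (hK : K = fun q : ℝ × ℝ => a + (2 * b * q.1 + c) / (q.1 ^ 2 - q.2 ^ 2)) :
    ∀ p : ℝ × ℝ, |p.2| < p.1 → (hessian K p).PosDef := by
  intro p hp
  have hx : 0 < p.1 := lt_of_le_of_lt (abs_nonneg _) hp
  have hD : 0 < p.1 ^ 2 - p.2 ^ 2 := by
    nlinarith [sq_abs p.2, abs_nonneg p.2, hp]
  -- first partial derivatives on the open set {D ≠ 0}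
  set Kx : ℝ × ℝ → ℝ := fun q =>
    (-(2*b) * q.1 ^ 2 + -(2*b) * q.2 ^ 2 + 0 * (q.1 * q.2) + -(2*c) * q.1 + 0 * q.2 + 0)
      / (q.1 ^ 2 - q.2 ^ 2) ^ 2 with hKxdef
  set Ky : ℝ × ℝ → ℝ := fun q =>
    (0 * q.1 ^ 2 + 0 * q.2 ^ 2 + (4*b) * (q.1 * q.2) + 0 * q.1 + (2*c) * q.2 + 0)
      / (q.1 ^ 2 - q.2 ^ 2) ^ 2 with hKydef
  have hKd : ∀ q : ℝ × ℝ, q.1 ^ 2 - q.2 ^ 2 ≠ 0 → HasFDerivAt K (lm (Kx q) (Ky q)) q := by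
    intro q hq
    have hN := lm_hasFDerivAt_poly 0 0 0 (2*b) 0 c q
    have hDq := lm_hasFDerivAt_D q
    have hdiv := (lm_hasFDerivAt_div hN hDq hq).const_add a
    have hfun : K = fun q : ℝ × ℝ =>
        a + (0 * q.1 ^ 2 + 0 * q.2 ^ 2 + 0 * (q.1 * q.2) + 2*b * q.1 + 0 * q.2 + c)
          / (q.1 ^ 2 - q.2 ^ 2) := by
      rw [hK]; funext q; ring_nf
    rw [hfun]
    have e1 : ((2 * 0 * q.1 + 0 * q.2 + 2*b) * (q.1 ^ 2 - q.2 ^ 2) -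
        (0 * q.1 ^ 2 + 0 * q.2 ^ 2 + 0 * (q.1 * q.2) + 2*b * q.1 + 0 * q.2 + c) * (2 * q.1))
          / (q.1 ^ 2 - q.2 ^ 2) ^ 2 = Kx q := by
      rw [hKxdef]; field_simp; ring
    have e2 : ((2 * 0 * q.2 + 0 * q.1 + 0) * (q.1 ^ 2 - q.2 ^ 2) -
        (0 * q.1 ^ 2 + 0 * q.2 ^ 2 + 0 * (q.1 * q.2) + 2*b * q.1 + 0 * q.2 + c) * (-(2 * q.2)))
          / (q.1 ^ 2 - q.2 ^ 2) ^ 2 = Ky q := by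
      rw [hKydef]; field_simp; ring
    rw [← lm_eq e1 e2]
    exact hdiv
  have hVopen : IsOpen {q : ℝ × ℝ | q.1 ^ 2 - q.2 ^ 2 ≠ 0} := by
    have : Continuous fun q : ℝ × ℝ => q.1 ^ 2 - q.2 ^ 2 := by fun_prop
    exact isOpen_ne.preimage this
  have hmem : {q : ℝ × ℝ | q.1 ^ 2 - q.2 ^ 2 ≠ 0} ∈ nhds p :=
    hVopen.mem_nhds (ne_of_gt hD)
  have hEx : pdx K =ᶠ[nhds p] Kx := by
    filter_upwards [hmem] with q hq
    rw [pdx, (hKd q hq).fderiv]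
    simp
  have hEy : pdy K =ᶠ[nhds p] Ky := by
    filter_upwards [hmem] with q hq
    rw [pdy, (hKd q hq).fderiv]
    simp
  -- second derivatives
  have hD2 : (p.1 ^ 2 - p.2 ^ 2) ^ 2 ≠ 0 := pow_ne_zero 2 (ne_of_gt hD)
  have hKx' := lm_hasFDerivAt_div (lm_hasFDerivAt_poly (-(2*b)) (-(2*b)) 0 (-(2*c)) 0 0 p)
      (lm_hasFDerivAt_Dsq p) hD2
  have hKy' := lm_hasFDerivAt_div (lm_hasFDerivAt_poly 0 0 (4*b) 0 (2*c) 0 p)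
      (lm_hasFDerivAt_Dsq p) hD2
  set x := p.1
  set y := p.2
  obtain ⟨A, hA⟩ : ∃ A : ℝ, A = 4*b*x^3 + 12*b*x*y^2 + 6*c*x^2 + 2*c*y^2 := ⟨_, rfl⟩
  obtain ⟨B, hB⟩ : ∃ B : ℝ, B = -(12*b*x^2*y) - 4*b*y^3 - 8*c*x*y := ⟨_, rfl⟩
  obtain ⟨C, hC⟩ : ∃ C : ℝ, C = 4*b*x^3 + 12*b*x*y^2 + 2*c*x^2 + 6*c*y^2 := ⟨_, rfl⟩
  obtain ⟨D3, hD3⟩ : ∃ D3 : ℝ, D3 = (x^2 - y^2)^3 := ⟨_, rfl⟩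
  have hD3pos : 0 < D3 := hD3 ▸ pow_pos hD 3
  have Hxx : pdx (pdx K) p = A / D3 := by
    rw [pdx, hEx.fderiv_eq, hKx'.fderiv]
    simp only [lm_apply]
    rw [hA, hD3]
    field_simp
    ring
  have Hxy : pdy (pdx K) p = B / D3 := by
    rw [pdy, hEx.fderiv_eq, hKx'.fderiv]
    simp only [lm_apply]
    rw [hB, hD3]
    field_simp
    ring
  have Hyx : pdx (pdy K) p = B / D3 := by
    rw [pdx, hEy.fderiv_eq, hKy'.fderiv]
    simp only [lm_apply]
    rw [hB, hD3]
    field_simp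
    ring
  have Hyy : pdy (pdy K) p = C / D3 := by
    rw [pdy, hEy.fderiv_eq, hKy'.fderiv]
    simp only [lm_apply]
    rw [hC, hD3]
    field_simp
    ring
  -- positivity facts
  have hApos : 0 < A := by
    rw [hA]
    nlinarith [mul_pos hb (pow_pos hx 3), mul_pos hc (pow_pos hx 2),
      mul_nonneg (mul_nonneg hb.le hx.le) (sq_nonneg y), mul_nonneg hc.le (sq_nonneg y)]
  have hdet : A * C - B ^ 2 = (x^2 - y^2)^2 * (16*b^2*(x^2 - y^2) + 32*b*c*x + 12*c^2) := by
    rw [hA, hB, hC]; ring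
  have hdetpos : 0 < A * C - B ^ 2 := by
    rw [hdet]
    have h1 : 0 < 16*b^2*(x^2 - y^2) + 32*b*c*x + 12*c^2 := by
      nlinarith [mul_pos (mul_pos hb hc) hx, mul_pos hb hb, mul_pos hc hc]
    positivity
  rw [Matrix.posDef_iff_dotProduct_mulVec]
  constructor
  · -- Hermitian
    show (hessian K p).conjTranspose = hessian K p
    have hM : (hessian K p) = !![A/D3, B/D3; B/D3, C/D3] := by
      rw [hessian, Hxx, Hxy, Hyx, Hyy]
    rw [hM]
    ext i j
    fin_cases i <;> fin_cases j <;> simp [Matrix.conjTranspose_apply]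
  · intro v hv
    have hvv : v 0 ≠ 0 ∨ v 1 ≠ 0 := by
      by_contra h
      push_neg at h
      apply hv
      ext i
      fin_cases i <;> simp [h.1, h.2]
    have hM : (hessian K p) = !![A/D3, B/D3; B/D3, C/D3] := by
      rw [hessian, Hxx, Hxy, Hyx, Hyy]
    rw [hM]
    simp only [dotProduct, Matrix.mulVec, Fin.sum_univ_two, Pi.star_apply, star_trivial,
      Matrix.cons_val', Matrix.cons_val_zero, Matrix.cons_val_one, Matrix.head_cons,
      Matrix.empty_val', Matrix.cons_val_fin_one, Matrix.head_fin_const]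
    set u := v 0
    set w := v 1
    have key : 0 < A * u ^ 2 + 2 * B * (u * w) + C * w ^ 2 :=
      quad_form_pos hApos hdetpos hvv
    have expand : u * (A/D3 * u + B/D3 * w) + w * (B/D3 * u + C/D3 * w)
        = (A * u ^ 2 + 2 * B * (u * w) + C * w ^ 2) / D3 := by
      field_simp
      ring
    calc (0:ℝ) < (A * u ^ 2 + 2 * B * (u * w) + C * w ^ 2) / D3 := div_pos key hD3pos
      _ = u * (A/D3 * u + B/D3 * w) + w * (B/D3 * u + C/D3 * w) := expand.symm
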